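/- arXiv:1203.0224 — 2 statements merged into one kernel-verified Lean document; each statement's English description precedes it below -/
import Mathlib

section
/- Let G = (A, B, E) be a bipartite Label Cover instance with |A| = |B| = n/2 in which every vertex has degree exactly d, with alphabets satisfying |Σ_A| ≥ |Σ_B| ≥ 2, and suppose that every labeling satisfies at most s·|E| edges, where 0 < s ≤ 1. Let 1 ≤ α ≤ 1/s and let G_α be the random subgraph of G obtained by keeping each edge independently with probability p_α = α·log₂|Σ_A| / d. Then for all sufficiently large n, with probability at least 2/3 the following holds: every labeling (γ_A, γ_B) satisfies at most a 4e/α fraction of the edges of G_α (where e is Euler's number). Moreover, if some labeling satisfies all edges of G, then with probability 1 that labeling satisfies all edges of G_α. -/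
open MeasureTheory

/-- The product Bernoulli(p) measure on subsets of a finite index type `ι`
(each coordinate kept independently with probability `p`, for `0 ≤ p ≤ 1`). -/
noncomputable def bernoulliProd (ι : Type) [Fintype ι] (p : ℝ) :
    Measure (ι → Bool) :=
  Measure.pi fun _ => (PMF.bernoulli (min (Real.toNNReal p) 1) (min_le_right _ _)).toMeasure

open ProbabilityTheory Finset
open scoped ENNReal

set_option maxHeartbeats 1000000

section Aux

variable {ι : Type} [Fintype ι] {p : ℝ}

noncomputable def bmeas (p : ℝ) : Measure Bool :=
  (PMF.bernoulli (min (Real.toNNReal p) 1) (min_le_right _ _)).toMeasure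

instance : IsProbabilityMeasure (bmeas p) := PMF.toMeasure.isProbabilityMeasure _

instance : IsProbabilityMeasure (bernoulliProd ι p) := by
  unfold bernoulliProd
  exact MeasureTheory.Measure.pi.instIsProbabilityMeasure _

lemma bernoulliProd_eq_pi : bernoulliProd ι p = Measure.pi (fun _ : ι => bmeas p) := rfl

lemma bmeas_true (hp1 : p ≤ 1) : bmeas p {true} = ENNReal.ofReal p := by
  rw [bmeas, PMF.toMeasure_apply_singleton _ _ (measurableSet_singleton _),
    PMF.bernoulli_apply]
  simp [min_eq_left (Real.toNNReal_le_one.2 hp1), ENNReal.ofReal]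

/-- measure of the cylinder: all coordinates in `T` are `true`. -/
lemma bernoulliProd_cylinder (hp1 : p ≤ 1) (T : Finset ι) :
    bernoulliProd ι p {ω | ∀ i ∈ T, ω i = true} = (ENNReal.ofReal p) ^ T.card := by
  classical
  have hset : {ω : ι → Bool | ∀ i ∈ T, ω i = true} =
      Set.pi Set.univ (fun i => if i ∈ T then {true} else Set.univ) := by
    ext ω
    simp only [Set.mem_setOf_eq, Set.mem_pi, Set.mem_univ, forall_true_left]
    constructor
    · intro h i
      by_cases hi : i ∈ T <;> simp [hi, h]
    · intro h i hi
      have := h i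
      simpa [hi] using this
  rw [bernoulliProd_eq_pi, hset, Measure.pi_pi]
  have : ∀ i : ι, bmeas p (if i ∈ T then {true} else Set.univ) =
      (if i ∈ T then ENNReal.ofReal p else 1) := by
    intro i
    split
    · simp [bmeas_true hp1]
    · exact measure_univ
  simp only [this]
  rw [Finset.prod_ite_mem Finset.univ T (fun _ => ENNReal.ofReal p)]
  simp [Finset.univ_inter, Finset.prod_const]

lemma bernoulliProd_tail (hp1 : p ≤ 1) (S : Finset ι) (k : ℕ) [DecidableEq ι] :
    bernoulliProd ι p {ω | k ≤ (S.filter fun i => ω i).card} ≤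
      (S.card.choose k) * (ENNReal.ofReal p) ^ k := by
  classical
  have hsub : {ω : ι → Bool | k ≤ (S.filter fun i => ω i).card} ⊆
      ⋃ T ∈ S.powersetCard k, {ω | ∀ i ∈ T, ω i = true} := by
    intro ω hω
    obtain ⟨T, hTsub, hTcard⟩ := Finset.exists_subset_card_eq hω
    refine Set.mem_iUnion₂.2 ⟨T, ?_, ?_⟩
    · exact Finset.mem_powersetCard.2 ⟨hTsub.trans (Finset.filter_subset _ _), hTcard⟩
    · intro i hi
      exact (Finset.mem_filter.1 (hTsub hi)).2
  refine (measure_mono hsub).trans ?_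
  refine (measure_biUnion_finset_le _ _).trans ?_
  have hc : ∀ T ∈ S.powersetCard k,
      bernoulliProd ι p {ω | ∀ i ∈ T, ω i = true} = (ENNReal.ofReal p) ^ k := by
    intro T hT
    rw [bernoulliProd_cylinder hp1, (Finset.mem_powersetCard.1 hT).2]
  rw [Finset.sum_congr rfl hc]
  simp [Finset.sum_const, Finset.card_powersetCard, nsmul_eq_mul]

noncomputable def coordInd (i : ι) : (ι → Bool) → ℝ := fun ω => if ω i then 1 else 0

lemma coordInd_eq_indicator (i : ι) :
    coordInd (ι := ι) i = Set.indicator {ω : ι → Bool | ω i = true} (fun _ => (1:ℝ)) := by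
  ext ω; by_cases h : ω i <;> simp [coordInd, Set.indicator, h]

@[simp] lemma bmeas_pair : bmeas p {false, true} = 1 := by
  have h : ({false, true} : Set Bool) = Set.univ := by ext b; cases b <;> simp
  rw [h]; exact measure_univ

lemma integral_coordInd (hp0 : 0 ≤ p) (hp1 : p ≤ 1) (i : ι) :
    ∫ ω, coordInd i ω ∂(bernoulliProd ι p) = p := by
  classical
  rw [show (fun ω => coordInd (ι := ι) i ω) = coordInd i from rfl, coordInd_eq_indicator,
    integral_indicator_const _ (MeasurableSet.of_discrete), smul_eq_mul, mul_one]
  have h2 : {ω : ι → Bool | ω i = true} = {ω | ∀ j ∈ ({i} : Finset ι), ω j = true} := by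
    ext ω; simp
  rw [h2, measureReal_def, bernoulliProd_cylinder hp1]
  simp [ENNReal.toReal_ofReal hp0]

lemma variance_coordInd (hp0 : 0 ≤ p) (hp1 : p ≤ 1) (i : ι) :
    variance (coordInd i) (bernoulliProd ι p) ≤ p := by
  refine (variance_le_expectation_sq ((MemLp.of_discrete : MemLp (coordInd i) 2 (bernoulliProd ι p))).aestronglyMeasurable).trans ?_
  have h : (coordInd (ι := ι) i) ^ 2 = coordInd i := by
    ext ω; by_cases h : ω i <;> simp [coordInd, h]
  rw [h, integral_coordInd hp0 hp1 i]

lemma indepFun_coordInd (hp1 : p ≤ 1) {i j : ι} (hij : i ≠ j) [DecidableEq ι] :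
    IndepFun (coordInd (ι := ι) i) (coordInd j) (bernoulliProd ι p) := by
  classical
  have base : IndepFun (fun ω : ι → Bool => ω i) (fun ω => ω j) (bernoulliProd ι p) := by
    rw [indepFun_iff_measure_inter_preimage_eq_mul]
    intro s t _ _
    have hone : ∀ (l : ι) (u : Set Bool),
        bernoulliProd ι p ((fun ω : ι → Bool => ω l) ⁻¹' u) = bmeas p u := by
      intro l u
      have hs : (fun ω : ι → Bool => ω l) ⁻¹' u =
          Set.pi Set.univ (fun m => if m = l then u else Set.univ) := by
        ext ω
        simp only [Set.mem_preimage, Set.mem_pi, Set.mem_univ, forall_true_left]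
        constructor
        · intro h m
          by_cases hm : m = l
          · subst hm; simpa using h
          · simp [hm]
        · intro h; have := h l; simpa using this
      rw [hs, bernoulliProd_eq_pi, Measure.pi_pi]
      rw [Finset.prod_eq_single l (fun m _ hm => by simp [hm]) (by simp)]
      simp
    have htwo : bernoulliProd ι p
        ((fun ω : ι → Bool => ω i) ⁻¹' s ∩ (fun ω : ι → Bool => ω j) ⁻¹' t) =
        bmeas p s * bmeas p t := by
      have hs : (fun ω : ι → Bool => ω i) ⁻¹' s ∩ (fun ω : ι → Bool => ω j) ⁻¹' t =
          Set.pi Set.univ (fun m => if m = i then s else if m = j then t else Set.univ) := by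
        ext ω
        constructor
        · rintro ⟨h1, h2⟩ m
          by_cases hm : m = i
          · subst hm; simpa using h1
          · by_cases hm' : m = j
            · subst hm'; simpa [hm] using h2
            · simp [hm, hm']
        · intro h
          refine ⟨?_, ?_⟩
          · have := h i; simpa using this
          · have := h j; simpa [hij.symm] using this
      rw [hs, bernoulliProd_eq_pi, Measure.pi_pi]
      rw [← Finset.prod_subset (Finset.subset_univ ({i, j} : Finset ι))
        (fun m _ hm => by
          simp only [Finset.mem_insert, Finset.mem_singleton, not_or] at hm
          simp [hm.1, hm.2])]
      rw [Finset.prod_pair hij]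
      simp [hij.symm]
    rw [htwo, hone, hone]
  have hg : Measurable (fun b : Bool => if b then (1:ℝ) else 0) := measurable_of_countable _
  exact base.comp hg hg

lemma card_filter_eq_sum_coordInd (S : Finset ι) (ω : ι → Bool) :
    ((S.filter fun i => ω i).card : ℝ) = ∑ i ∈ S, coordInd i ω := by
  rw [Finset.card_filter]
  push_cast
  exact Finset.sum_congr rfl (fun i _ => by by_cases h : ω i <;> simp [coordInd, h])

lemma bernoulliProd_lower [DecidableEq ι] (hp0 : 0 < p) (hp1 : p ≤ 1) (S : Finset ι)
    (hS : 0 < S.card) :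
    bernoulliProd ι p {ω | ((S.filter fun i => ω i).card : ℝ) ≤ p * S.card / 2} ≤
      ENNReal.ofReal (4 / (p * S.card)) := by
  classical
  set μ := bernoulliProd ι p with hμ
  set M : (ι → Bool) → ℝ := ∑ i ∈ S, coordInd i with hM
  have hMapp : ∀ ω, M ω = ∑ i ∈ S, coordInd i ω := by
    intro ω; rw [hM, Finset.sum_apply]
  have hmemM : MemLp M 2 μ := MemLp.of_discrete
  have hEM : μ[M] = p * S.card := by
    rw [hM]
    simp only [Finset.sum_apply]
    rw [integral_finset_sum S (fun i _ => (Integrable.of_finite : Integrable (coordInd i) μ))]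
    rw [Finset.sum_congr rfl (fun i _ => integral_coordInd hp0.le hp1 i)]
    rw [Finset.sum_const, nsmul_eq_mul, mul_comm]
  have hVar : variance M μ ≤ p * S.card := by
    rw [hM, IndepFun.variance_sum (fun i _ => MemLp.of_discrete)
      (fun i _ j _ hij => indepFun_coordInd hp1 hij)]
    calc ∑ i ∈ S, variance (coordInd i) μ ≤ ∑ i ∈ S, p :=
          Finset.sum_le_sum (fun i _ => variance_coordInd hp0.le hp1 i)
      _ = p * S.card := by rw [Finset.sum_const, nsmul_eq_mul, mul_comm]
  have hc : (0:ℝ) < p * S.card / 2 := by positivity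
  have hcheb := meas_ge_le_variance_div_sq (μ := μ) hmemM hc
  have hsub : {ω : ι → Bool | ((S.filter fun i => ω i).card : ℝ) ≤ p * S.card / 2} ⊆
      {ω | p * S.card / 2 ≤ |M ω - μ[M]|} := by
    intro ω hω
    simp only [Set.mem_setOf_eq] at hω ⊢
    rw [hEM]
    have h1 : M ω = ((S.filter fun i => ω i).card : ℝ) := by
      rw [hMapp, card_filter_eq_sum_coordInd]
    rw [abs_sub_comm]
    calc p * S.card / 2 = p * S.card - p * S.card / 2 := by ring
      _ ≤ p * S.card - M ω := by rw [h1]; linarith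
      _ ≤ |p * S.card - M ω| := le_abs_self _
  refine (measure_mono hsub).trans (hcheb.trans ?_)
  apply ENNReal.ofReal_le_ofReal
  rw [div_le_div_iff₀ (by positivity) (by positivity)]
  calc variance M μ * (p * S.card) ≤ (p * S.card) * (p * S.card) :=
        mul_le_mul_of_nonneg_right hVar (by positivity)
    _ = 4 * (p * ↑S.card / 2) ^ 2 := by ring

end Aux

/-- Binomial-tail helper: `C(N,k) p^k ≤ (1/2)^k` when `N·p ≤ x` and `2e·x ≤ k`. -/
lemma choose_mul_pow_le {p x : ℝ} (N k : ℕ) (hk : 0 < k) (hp0 : 0 ≤ p)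
    (hN : (N : ℝ) * p ≤ x) (hx0 : 0 ≤ x) (hxk : 2 * Real.exp 1 * x ≤ k) :
    (N.choose k : ℝ) * p ^ k ≤ (1/2) ^ k := by
  have hkR : (0:ℝ) < k := by exact_mod_cast hk
  have hfact : (0:ℝ) < (k.factorial : ℝ) := by exact_mod_cast k.factorial_pos
  have h1 : (N.choose k : ℝ) ≤ (N:ℝ) ^ k / k.factorial := by
    have := Nat.choose_le_pow_div (α := ℝ) k N
    simpa using this
  have h2 : (N.choose k : ℝ) * p ^ k ≤ ((N:ℝ) * p) ^ k / k.factorial := by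
    calc (N.choose k : ℝ) * p ^ k ≤ ((N:ℝ) ^ k / k.factorial) * p ^ k :=
          mul_le_mul_of_nonneg_right h1 (pow_nonneg hp0 k)
      _ = ((N:ℝ) * p) ^ k / k.factorial := by rw [mul_pow]; ring
  have h3 : ((N:ℝ) * p) ^ k / k.factorial ≤ x ^ k / k.factorial := by
    gcongr
  have hkfac : ((k:ℝ)) ^ k ≤ Real.exp 1 ^ k * k.factorial := by
    have := Real.pow_div_factorial_le_exp (x := (k:ℝ)) (Nat.cast_nonneg k) k
    rw [div_le_iff₀ hfact] at this
    calc ((k:ℝ)) ^ k ≤ Real.exp k * k.factorial := this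
      _ = Real.exp 1 ^ k * k.factorial := by rw [← Real.exp_one_pow]
  have h4 : x ^ k / k.factorial ≤ (Real.exp 1 * x / k) ^ k := by
    rw [div_pow, mul_pow, div_le_div_iff₀ hfact (pow_pos hkR k)]
    calc x ^ k * (k:ℝ) ^ k ≤ x ^ k * (Real.exp 1 ^ k * k.factorial) :=
          mul_le_mul_of_nonneg_left hkfac (pow_nonneg hx0 k)
      _ = Real.exp 1 ^ k * x ^ k * k.factorial := by ring
  have h5 : (Real.exp 1 * x / k) ^ k ≤ (1/2) ^ k := by
    apply pow_le_pow_left₀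
    · positivity
    · rw [div_le_div_iff₀ hkR (by norm_num : (0:ℝ) < 2)]
      linarith
  calc (N.choose k : ℝ) * p ^ k ≤ ((N:ℝ) * p) ^ k / k.factorial := h2
    _ ≤ x ^ k / k.factorial := h3
    _ ≤ (Real.exp 1 * x / k) ^ k := h4
    _ ≤ (1/2) ^ k := h5


/-- subsampling a regular Label Cover instance with soundness `s` with edge
probability `p_α = α·log₂|Σ_A|/d` (for `1 ≤ α ≤ 1/s`) yields, with probability at least
`2/3`, an instance where every labeling satisfies at most a `4e/α` fraction of the
surviving edges; moreover a perfect labeling of `G` stays perfect with probability 1. -/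
theorem subsampled_labelCover_soundness :
    ∃ N : ℕ, ∀ n : ℕ, N ≤ n →
    ∀ (A B SA SB : Type) [Fintype A] [Fintype B] [Fintype SA] [Fintype SB]
      [DecidableEq A] [DecidableEq B] [DecidableEq SA] [DecidableEq SB]
      (E : Finset (A × B)) (π : A × B → Finset (SA × SB)) (d : ℕ) (s α : ℝ),
      2 * Fintype.card A = n → 2 * Fintype.card B = n →
      (∀ a : A, (E.filter fun f => f.1 = a).card = d) →
      (∀ b : B, (E.filter fun f => f.2 = b).card = d) →
      2 ≤ Fintype.card SB → Fintype.card SB ≤ Fintype.card SA →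
      (∀ f ∈ E, (π f).Nonempty) →
      0 < s → s ≤ 1 →
      (∀ (γA : A → SA) (γB : B → SB),
        ((E.filter fun f => (γA f.1, γB f.2) ∈ π f).card : ℝ) ≤ s * E.card) →
      1 ≤ α → α ≤ 1 / s →
      α * Real.logb 2 (Fintype.card SA) / d ≤ 1 →
      -- with probability at least 2/3, every labeling satisfies at most a 4e/α
      -- fraction of the sampled edges
      ((2 / 3 : ENNReal) ≤
        bernoulliProd (A × B) (α * Real.logb 2 (Fintype.card SA) / d)
          {ω | ∀ (γA : A → SA) (γB : B → SB),
            (((E.filter fun f => ω f).filter fun f => (γA f.1, γB f.2) ∈ π f).card : ℝ)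
              ≤ 4 * Real.exp 1 / α * (E.filter fun f => ω f).card}) ∧
      -- a perfect labeling stays perfect with probability 1
      (∀ (γA : A → SA) (γB : B → SB), (∀ f ∈ E, (γA f.1, γB f.2) ∈ π f) →
        bernoulliProd (A × B) (α * Real.logb 2 (Fintype.card SA) / d)
          {ω | ∀ f ∈ E.filter fun f => ω f, (γA f.1, γB f.2) ∈ π f} = 1) := by
  classical
  refine ⟨48, ?_⟩
  intro n hn A B SA SB _ _ _ _ _ _ _ _ E π d s α hA hB hdA hdB hSB hSBA hπne hs0 hs1
    hsound hα1 hαs hp1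
  set L : ℝ := Real.logb 2 (Fintype.card SA) with hL_def
  set p : ℝ := α * L / d with hp_def
  set μ := bernoulliProd (A × B) p with hμ_def
  -- basic facts
  have hα0 : (0:ℝ) < α := lt_of_lt_of_le one_pos hα1
  have hcardSA : (2:ℝ) ≤ (Fintype.card SA : ℝ) := by exact_mod_cast le_trans hSB hSBA
  have hL1 : 1 ≤ L := by
    rw [hL_def, Real.le_logb_iff_rpow_le (by norm_num) (by linarith)]
    rw [Real.rpow_one]; exact hcardSA
  have hp0 : 0 ≤ p := by
    rw [hp_def]
    apply div_nonneg (by nlinarith) (Nat.cast_nonneg d)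
  -- the second claim holds in general
  have hpart2 : ∀ (γA : A → SA) (γB : B → SB), (∀ f ∈ E, (γA f.1, γB f.2) ∈ π f) →
      μ {ω | ∀ f ∈ E.filter fun f => ω f, (γA f.1, γB f.2) ∈ π f} = 1 := by
    intro γA γB hper
    have huniv : {ω : A × B → Bool | ∀ f ∈ E.filter fun f => ω f, (γA f.1, γB f.2) ∈ π f}
        = Set.univ :=
      Set.eq_univ_iff_forall.2 (fun ω f hf => hper f (Finset.mem_filter.1 hf).1)
    rw [huniv]; exact measure_univ
  -- edge count
  set a : ℕ := Fintype.card A with ha_def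
  have hEcard : E.card = d * a := by
    rw [Finset.card_eq_sum_card_fiberwise (f := Prod.fst) (t := Finset.univ)
      (fun x _ => Finset.mem_univ _)]
    rw [Finset.sum_congr rfl (fun x _ => hdA x)]
    simp [ha_def, mul_comm]
  by_cases hd : d = 0
  · -- degenerate case: no edges
    have hEe : E = ∅ := Finset.card_eq_zero.mp (by rw [hEcard, hd, zero_mul])
    constructor
    · have huniv : {ω : A × B → Bool | ∀ (γA : A → SA) (γB : B → SB),
          (((E.filter fun f => ω f).filter fun f => (γA f.1, γB f.2) ∈ π f).card : ℝ)
            ≤ 4 * Real.exp 1 / α * (E.filter fun f => ω f).card} = Set.univ := by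
        apply Set.eq_univ_iff_forall.2
        intro ω γA γB
        simp [hEe]
      rw [huniv, measure_univ]
      exact ENNReal.div_le_of_le_mul (by norm_num)
    · exact hpart2
  · -- main case
    have hd1 : 1 ≤ d := Nat.one_le_iff_ne_zero.2 hd
    have ha24 : 24 ≤ a := by omega
    have haR : (24:ℝ) ≤ (a:ℝ) := by exact_mod_cast ha24
    have hnR : (n:ℝ) = 2 * a := by
      have : (2 * a : ℕ) = n := hA
      exact_mod_cast this.symm
    have hEpos : 0 < E.card := by
      rw [hEcard]; positivity
    have hdR : (0:ℝ) < d := by exact_mod_cast Nat.pos_of_ne_zero hd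
    have hpe : p * E.card = α * L * a := by
      rw [hp_def, hEcard]
      push_cast
      field_simp
    have hαL : 1 ≤ α * L := by nlinarith
    have hp0' : 0 < p := by
      rw [hp_def]; apply div_pos (by nlinarith) hdR
    have he2 : (2:ℝ) ≤ Real.exp 1 := by
      have := Real.exp_one_gt_d9; linarith
    have he0 : (0:ℝ) < Real.exp 1 := Real.exp_pos 1
    set k : ℕ := ⌈Real.exp 1 * L * n⌉₊ with hk_def
    have hkge : Real.exp 1 * L * n ≤ k := Nat.le_ceil _
    have hklt : (k:ℝ) < Real.exp 1 * L * n + 1 :=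
      Nat.ceil_lt_add_one (by positivity)
    have hk0 : 0 < k := by
      rw [hk_def, Nat.ceil_pos]
      have h48 : (48:ℝ) ≤ (n:ℝ) := by exact_mod_cast hn
      exact mul_pos (mul_pos he0 (by linarith)) (by linarith)
    -- bad events
    set Bad1 : Set (A × B → Bool) :=
      {ω | ((E.filter fun f => ω f).card : ℝ) ≤ p * E.card / 2} with hBad1_def
    set sat : (A → SA) × (B → SB) → Finset (A × B) :=
      fun γ => E.filter fun f => (γ.1 f.1, γ.2 f.2) ∈ π f with hsat_def
    set Bad2 : (A → SA) × (B → SB) → Set (A × B → Bool) :=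
      fun γ => {ω | k ≤ ((sat γ).filter fun f => ω f).card} with hBad2_def
    have hBad1 : μ Bad1 ≤ ENNReal.ofReal (1/6) := by
      refine (bernoulliProd_lower hp0' hp1 E hEpos).trans (ENNReal.ofReal_le_ofReal ?_)
      rw [hpe, div_le_div_iff₀ (by nlinarith) (by norm_num)]
      nlinarith
    have hsα : s * α ≤ 1 := by
      have := (le_div_iff₀ hs0).1 hαs
      linarith
    have hBad2 : ∀ γ, μ (Bad2 γ) ≤ ENNReal.ofReal ((1/2) ^ k) := by
      intro γ
      refine (bernoulliProd_tail hp1 (sat γ) k).trans ?_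
      have heq : ((sat γ).card.choose k : ℝ≥0∞) * (ENNReal.ofReal p) ^ k
          = ENNReal.ofReal (((sat γ).card.choose k : ℝ) * p ^ k) := by
        rw [ENNReal.ofReal_mul (Nat.cast_nonneg _), ENNReal.ofReal_natCast,
          ENNReal.ofReal_pow hp0]
      rw [heq]
      apply ENNReal.ofReal_le_ofReal
      refine choose_mul_pow_le _ _ hk0 hp0 (x := L * a) ?_ (by positivity) ?_
      · -- (card sat γ) * p ≤ L * a
        have h1 : ((sat γ).card : ℝ) ≤ s * E.card := hsound γ.1 γ.2
        have h2 : ((sat γ).card : ℝ) * p ≤ (s * E.card) * p :=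
          mul_le_mul_of_nonneg_right h1 hp0
        have h3 : (s * E.card) * p = s * (α * L * a) := by
          rw [show (s * (E.card:ℝ)) * p = s * (p * E.card) from by ring, hpe]
        nlinarith [mul_le_mul_of_nonneg_right hsα (by positivity : (0:ℝ) ≤ L * a)]
      · -- 2e (L a) ≤ k
        calc 2 * Real.exp 1 * (L * a) = Real.exp 1 * L * (2 * a) := by ring
          _ = Real.exp 1 * L * n := by rw [hnR]
          _ ≤ k := hkge
    have hBadU : μ (⋃ γ, Bad2 γ) ≤ ENNReal.ofReal (1/6) := by
      refine (measure_iUnion_le _).trans ?_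
      rw [tsum_fintype]
      refine (Finset.sum_le_sum (fun γ _ => hBad2 γ)).trans ?_
      rw [Finset.sum_const, nsmul_eq_mul, Finset.card_univ]
      have hcard : (Fintype.card ((A → SA) × (B → SB)) : ℝ≥0∞)
          = ENNReal.ofReal (Fintype.card ((A → SA) × (B → SB)) : ℝ) := by
        rw [ENNReal.ofReal_natCast]
      rw [hcard, ← ENNReal.ofReal_mul (Nat.cast_nonneg _)]
      apply ENNReal.ofReal_le_ofReal
      -- real estimate
      have hcard2 : (Fintype.card ((A → SA) × (B → SB)) : ℝ)
          ≤ ((Fintype.card SA : ℝ)) ^ (2 * a) := by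
        rw [Fintype.card_prod, Fintype.card_fun, Fintype.card_fun]
        have hB2 : Fintype.card B = a := by omega
        have : Fintype.card SB ^ Fintype.card B ≤ Fintype.card SA ^ a := by
          rw [hB2]; exact Nat.pow_le_pow_left hSBA a
        calc ((Fintype.card SA ^ Fintype.card A * Fintype.card SB ^ Fintype.card B : ℕ) : ℝ)
            ≤ ((Fintype.card SA ^ a * Fintype.card SA ^ a : ℕ) : ℝ) := by
              exact_mod_cast Nat.mul_le_mul (by rw [ha_def]) this
          _ = ((Fintype.card SA : ℝ)) ^ (2 * a) := by
              push_cast; rw [two_mul, pow_add]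
      have hSA_rpow : ((Fintype.card SA : ℝ)) ^ (2 * a) = (2:ℝ) ^ (L * (2 * a : ℕ)) := by
        rw [← Real.rpow_natCast ((Fintype.card SA : ℝ)) (2 * a),
          ← Real.rpow_logb (by norm_num : (0:ℝ) < 2) (by norm_num : (2:ℝ) ≠ 1)
            (by linarith : (0:ℝ) < (Fintype.card SA : ℝ)), ← hL_def,
          ← Real.rpow_mul (by norm_num : (0:ℝ) ≤ 2)]
      have hhalf : ((1:ℝ)/2) ^ k = (2:ℝ) ^ (-(k:ℝ)) := by
        rw [Real.rpow_neg (by norm_num : (0:ℝ) ≤ 2), Real.rpow_natCast, one_div, inv_pow]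
      calc (Fintype.card ((A → SA) × (B → SB)) : ℝ) * (1/2) ^ k
          ≤ (2:ℝ) ^ (L * (2 * a : ℕ)) * (2:ℝ) ^ (-(k:ℝ)) := by
            rw [← hSA_rpow, ← hhalf]
            exact mul_le_mul_of_nonneg_right hcard2 (by positivity)
        _ = (2:ℝ) ^ (L * (2 * a : ℕ) - (k:ℝ)) := by
            rw [← Real.rpow_add (by norm_num)]; ring_nf
        _ ≤ (2:ℝ) ^ (-(n:ℝ)) := by
            apply Real.rpow_le_rpow_of_exponent_le (by norm_num)
            have h2a : ((2 * a : ℕ) : ℝ) = (n:ℝ) := by rw [hnR]; push_cast; ring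
            rw [h2a]
            have h1 : (0:ℝ) ≤ (Real.exp 1 - 1) * L - 1 := by nlinarith
            have key : (n:ℝ) ≤ (Real.exp 1 - 1) * L * n := by
              nlinarith [mul_nonneg h1 (Nat.cast_nonneg n : (0:ℝ) ≤ (n:ℝ))]
            linarith [hkge]
        _ ≤ (2:ℝ) ^ (-(3:ℝ)) := by
            apply Real.rpow_le_rpow_of_exponent_le (by norm_num)
            have : (48:ℝ) ≤ (n:ℝ) := by exact_mod_cast hn
            linarith
        _ ≤ 1/6 := by
            have h8 : ((2:ℝ)) ^ (-(3:ℝ)) = 1/8 := by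
              rw [show (-(3:ℝ)) = ((-3 : ℤ) : ℝ) by norm_num, Real.rpow_intCast]
              norm_num
            rw [h8]; norm_num
    -- combine
    set Bad : Set (A × B → Bool) := Bad1 ∪ ⋃ γ, Bad2 γ with hBad_def
    have hBad : μ Bad ≤ 1/3 := by
      refine (measure_union_le _ _).trans ?_
      refine (add_le_add hBad1 hBadU).trans ?_
      rw [← ENNReal.ofReal_add (by norm_num) (by norm_num)]
      rw [show (1/6 + 1/6 : ℝ) = 1/3 by norm_num]
      rw [show (1/3:ℝ) = (3:ℝ)⁻¹ by norm_num, ENNReal.ofReal_inv_of_pos (by norm_num)]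
      rw [show ENNReal.ofReal (3:ℝ) = (3:ℝ≥0∞) by
        rw [show (3:ℝ) = ((3:ℕ):ℝ) by norm_num, ENNReal.ofReal_natCast]; norm_num]
      rw [one_div]
    constructor
    · -- subset argument
      have hsub : Badᶜ ⊆ {ω : A × B → Bool | ∀ (γA : A → SA) (γB : B → SB),
          (((E.filter fun f => ω f).filter fun f => (γA f.1, γB f.2) ∈ π f).card : ℝ)
            ≤ 4 * Real.exp 1 / α * (E.filter fun f => ω f).card} := by
        intro ω hω
        rw [Set.mem_compl_iff, hBad_def, Set.mem_union, not_or] at hω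
        obtain ⟨hω1, hω2⟩ := hω
        rw [Set.mem_iUnion, not_exists] at hω2
        rw [hBad1_def, Set.mem_setOf_eq, not_le] at hω1
        intro γA γB
        have hω2' := hω2 (γA, γB)
        rw [hBad2_def, Set.mem_setOf_eq, not_le] at hω2'
        have hcomm : ((E.filter fun f => ω f).filter fun f => (γA f.1, γB f.2) ∈ π f)
            = ((sat (γA, γB)).filter fun f => ω f) := by
          rw [hsat_def]
          exact Finset.filter_comm _ _ _
        rw [hcomm]
        set c : ℕ := ((sat (γA, γB)).filter fun f => ω f).card
        have hc1 : (c:ℝ) + 1 ≤ k := by exact_mod_cast hω2'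
        have hcn : (c:ℝ) < Real.exp 1 * L * n := by
          have := hklt; linarith
        have hm : α * L * a / 2 < ((E.filter fun f => ω f).card : ℝ) := by
          rw [← hpe]; exact hω1
        have hrhs : 4 * Real.exp 1 / α * (α * L * a / 2) = 2 * Real.exp 1 * L * a := by
          field_simp; ring
        have hmono : 4 * Real.exp 1 / α * (α * L * a / 2)
            ≤ 4 * Real.exp 1 / α * ((E.filter fun f => ω f).card : ℝ) := by
          apply mul_le_mul_of_nonneg_left hm.le (by positivity)
        have hceq : Real.exp 1 * L * n = 2 * Real.exp 1 * L * a := by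
          rw [hnR]; ring
        linarith
      have hsum : (2/3 + 1/3 : ℝ≥0∞) = 1 := by
        rw [ENNReal.div_add_div_same, show (2 + 1 : ℝ≥0∞) = 3 by norm_num,
          ENNReal.div_self (by norm_num) (by norm_num)]
      calc (2/3 : ℝ≥0∞) = 1 - 1/3 := by
            rw [ENNReal.sub_eq_of_eq_add (by rw [one_div]; exact ENNReal.inv_ne_top.2 (by norm_num) : (1/3:ℝ≥0∞) ≠ ⊤)
              hsum.symm]
        _ ≤ 1 - μ Bad := by
            exact tsub_le_tsub_left hBad 1
        _ = μ Badᶜ := by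
            rw [measure_compl (MeasurableSet.of_discrete) (measure_ne_top _ _), measure_univ]
        _ ≤ _ := measure_mono hsub
    · exact hpart2
end

section
/- Let G = (A, B, E) be a bipartite Label Cover instance with |A| = |B| = n/2 in which every vertex has degree between d/2 and 2d for some d > 0. If the instance has a REP-cover of size β·n for some β > 0, then there exists a labeling (γ_A, γ_B) that satisfies at least a 1/(972·β²) fraction of the edges of E. -/
/-- A REP-cover of a Label Cover instance `(E, π)` with alphabets `SA`, `SB`: a set of
labelled vertices such that every edge has a pair of chosen labels satisfying its
relation. -/
def RepCover {A B SA SB : Type}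
    (E : Finset (A × B)) (π : A × B → Finset (SA × SB))
    (C : Finset ((A × SA) ⊕ (B × SB))) : Prop :=
  ∀ f ∈ E, ∃ (α : SA) (β : SB),
    Sum.inl (f.1, α) ∈ C ∧ Sum.inr (f.2, β) ∈ C ∧ (α, β) ∈ π f

lemma piFinset_filter_card_mul {A S : Type} [Fintype A] [DecidableEq A] [DecidableEq S]
    (L : A → Finset S) (a : A) (α : S) (hα : α ∈ L a) :
    ((Fintype.piFinset L).filter (fun γ => γ a = α)).card * (L a).card
      = (Fintype.piFinset L).card := by
  classical
  have h1 : (Fintype.piFinset L).filter (fun γ => γ a = α)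
      = Fintype.piFinset (Function.update L a {α}) := by
    ext f
    simp only [Finset.mem_filter, Fintype.mem_piFinset]
    constructor
    · rintro ⟨h, rfl⟩
      intro x
      by_cases hx : x = a
      · subst hx; simp
      · simp [Function.update_of_ne hx, h x]
    · intro h
      have ha := h a
      simp at ha
      refine ⟨fun x => ?_, ha⟩
      by_cases hx : x = a
      · subst hx; simpa [ha] using hα
      · have := h x; simpa [Function.update_of_ne hx] using this
  rw [h1, Fintype.card_piFinset, Fintype.card_piFinset]
  rw [← Finset.mul_prod_erase Finset.univ _ (Finset.mem_univ a),
      ← Finset.mul_prod_erase Finset.univ (fun x => (L x).card) (Finset.mem_univ a)]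
  have h2 : ∀ x ∈ Finset.univ.erase a,
      ((Function.update L a ({α} : Finset S) x).card) = (L x).card := by
    intro x hx
    rw [Function.update_of_ne (Finset.mem_erase.1 hx).1]
  rw [Finset.prod_congr rfl h2]
  simp [mul_comm]


set_option maxHeartbeats 1000000

/-- if a Label Cover instance with `|A| = |B| = n/2` and all degrees between
`d/2` and `2d` has a REP-cover of size `β·n`, then some labeling satisfies at least a
`1/(972 β²)` fraction of the edges. -/
theorem labeling_from_repCover {A B SA SB : Type}
    [Fintype A] [Fintype B] [Fintype SA] [Fintype SB]
    [DecidableEq A] [DecidableEq B] [DecidableEq SA] [DecidableEq SB]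
    (E : Finset (A × B)) (π : A × B → Finset (SA × SB))
    (n : ℕ) (d β : ℝ) (hd : 0 < d) (hβ : 0 < β)
    (hA : 2 * Fintype.card A = n) (hB : 2 * Fintype.card B = n)
    (hdegA : ∀ a : A, d / 2 ≤ ((E.filter fun f => f.1 = a).card : ℝ) ∧
      ((E.filter fun f => f.1 = a).card : ℝ) ≤ 2 * d)
    (hdegB : ∀ b : B, d / 2 ≤ ((E.filter fun f => f.2 = b).card : ℝ) ∧
      ((E.filter fun f => f.2 = b).card : ℝ) ≤ 2 * d)
    (C : Finset ((A × SA) ⊕ (B × SB)))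
    (hC : RepCover E π C) (hCcard : (C.card : ℝ) = β * n) :
    ∃ (γA : A → SA) (γB : B → SB),
      (E.card : ℝ) / (972 * β ^ 2) ≤
        ((E.filter fun f => (γA f.1, γB f.2) ∈ π f).card : ℝ) := by
    classical
  set LA : A → Finset SA := fun a => Finset.univ.filter (fun α => Sum.inl (a, α) ∈ C) with hLA
  set LB : B → Finset SB := fun b => Finset.univ.filter (fun β => Sum.inr (b, β) ∈ C) with hLB
  -- every vertex has at least one label in the cover
  have hLAne : ∀ a, (LA a).Nonempty := by
    intro a
    have h1 := (hdegA a).1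
    have h2 : (E.filter fun f => f.1 = a).Nonempty := by
      rw [Finset.nonempty_iff_ne_empty]
      intro h
      rw [h] at h1; simp at h1; linarith
    obtain ⟨f, hf⟩ := h2
    rw [Finset.mem_filter] at hf
    obtain ⟨α, β', hα, hβ', hπ⟩ := hC f hf.1
    rw [hf.2] at hα
    exact ⟨α, by simp [hLA, hα]⟩
  have hLBne : ∀ b, (LB b).Nonempty := by
    intro b
    have h1 := (hdegB b).1
    have h2 : (E.filter fun f => f.2 = b).Nonempty := by
      rw [Finset.nonempty_iff_ne_empty]
      intro h
      rw [h] at h1; simp at h1; linarith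
    obtain ⟨f, hf⟩ := h2
    rw [Finset.mem_filter] at hf
    obtain ⟨α, β', hα, hβ', hπ⟩ := hC f hf.1
    rw [hf.2] at hβ'
    exact ⟨β', by simp [hLB, hβ']⟩
  -- total number of labels in the cover
  have hsumA : (∑ a, (LA a).card) ≤ (C.filter (fun x => x.isLeft = true)).card := by
    rw [← Finset.card_sigma]
    apply Finset.card_le_card_of_injOn (fun x => Sum.inl (x.1, x.2))
    · rintro ⟨a, α⟩ hx
      rw [Finset.mem_coe, Finset.mem_sigma] at hx
      have : Sum.inl (a, α) ∈ C := by
        have := hx.2; simp [hLA] at this; exact this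
      simp [this]
    · rintro ⟨a, α⟩ _ ⟨a', α'⟩ _ h
      simp only [Sum.inl.injEq, Prod.mk.injEq] at h
      obtain ⟨rfl, rfl⟩ := h
      rfl
  have hsumB : (∑ b, (LB b).card) ≤ (C.filter (fun x => ¬ (x.isLeft = true))).card := by
    rw [← Finset.card_sigma]
    apply Finset.card_le_card_of_injOn (fun x => Sum.inr (x.1, x.2))
    · rintro ⟨b, β'⟩ hx
      rw [Finset.mem_coe, Finset.mem_sigma] at hx
      have : Sum.inr (b, β') ∈ C := by
        have := hx.2; simp [hLB] at this; exact this
      simp [this]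
    · rintro ⟨b, β'⟩ _ ⟨b', βx⟩ _ h
      simp only [Sum.inr.injEq, Prod.mk.injEq] at h
      obtain ⟨rfl, rfl⟩ := h
      rfl
  have hsum : (∑ a, (LA a).card) + (∑ b, (LB b).card) ≤ C.card := by
    have := Finset.card_filter_add_card_filter_not
      (s := C) (p := fun x => x.isLeft = true)
    omega
  -- |E| ≥ n d / 4
  have hEcard : (n : ℝ) * d ≤ 4 * E.card := by
    have hfib : E.card = ∑ a : A, (E.filter fun f => f.1 = a).card :=
      Finset.card_eq_sum_card_fiberwise (fun f _ => Finset.mem_univ f.1)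
    have h2 : (Fintype.card A : ℝ) * (d / 2) ≤ (E.card : ℝ) := by
      rw [hfib]
      push_cast
      calc (Fintype.card A : ℝ) * (d/2) = ∑ _a : A, d/2 := by
            rw [Finset.sum_const, Finset.card_univ]; ring
        _ ≤ ∑ a : A, ((E.filter fun f => f.1 = a).card : ℝ) :=
            Finset.sum_le_sum (fun a _ => (hdegA a).1)
    have hn : (n : ℝ) = 2 * Fintype.card A := by exact_mod_cast hA.symm
    rw [hn]; linarith
  -- bad-edge bound, A side
  have hbadA : ((E.filter fun f => ¬ (((LA f.1).card:ℝ) ≤ 12*β)).card : ℝ) * (12*β)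
      ≤ 2*d * (∑ a, ((LA a).card:ℝ)) := by
    set Bad := Finset.univ.filter (fun a : A => ¬ (((LA a).card:ℝ) ≤ 12*β)) with hBad
    have hfib : (E.filter fun f => ¬ (((LA f.1).card:ℝ) ≤ 12*β)).card
        = ∑ a ∈ Bad, ((E.filter fun f => ¬ (((LA f.1).card:ℝ) ≤ 12*β)).filter
            (fun f => f.1 = a)).card := by
      apply Finset.card_eq_sum_card_fiberwise
      intro f hf
      rw [Finset.mem_coe, Finset.mem_filter] at hf
      simp only [hBad, Finset.mem_coe, Finset.mem_filter]
      exact ⟨Finset.mem_univ _, hf.2⟩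
    have hstep : ((E.filter fun f => ¬ (((LA f.1).card:ℝ) ≤ 12*β)).card : ℝ)
        ≤ (Bad.card : ℝ) * (2*d) := by
      rw [hfib]
      push_cast
      calc (∑ a ∈ Bad, (((E.filter fun f => ¬ (((LA f.1).card:ℝ) ≤ 12*β)).filter
            (fun f => f.1 = a)).card : ℝ))
          ≤ ∑ a ∈ Bad, (2*d) := by
            apply Finset.sum_le_sum
            intro a _
            have hsub : (E.filter fun f => ¬ (((LA f.1).card:ℝ) ≤ 12*β)).filter
                (fun f => f.1 = a) ⊆ E.filter (fun f => f.1 = a) := by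
              intro f hf
              simp only [Finset.mem_filter] at hf ⊢
              exact ⟨hf.1.1, hf.2⟩
            calc (((E.filter fun f => ¬ (((LA f.1).card:ℝ) ≤ 12*β)).filter
                  (fun f => f.1 = a)).card : ℝ)
                ≤ ((E.filter (fun f => f.1 = a)).card : ℝ) := by
                  exact_mod_cast Finset.card_le_card hsub
              _ ≤ 2*d := (hdegA a).2
        _ = (Bad.card : ℝ) * (2*d) := by rw [Finset.sum_const]; simp [mul_comm]
    have hbadcard : (Bad.card : ℝ) * (12*β) ≤ ∑ a, ((LA a).card:ℝ) := by
      calc (Bad.card : ℝ) * (12*β) = ∑ _a ∈ Bad, (12*β) := by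
            rw [Finset.sum_const]; simp [mul_comm]
        _ ≤ ∑ a ∈ Bad, ((LA a).card:ℝ) := by
            apply Finset.sum_le_sum
            intro a ha
            simp only [hBad, Finset.mem_filter] at ha
            linarith [ha.2]
        _ ≤ ∑ a, ((LA a).card:ℝ) := by
            apply Finset.sum_le_sum_of_subset_of_nonneg (Finset.subset_univ _)
            intro a _ _; positivity
    nlinarith [mul_le_mul_of_nonneg_right hstep (by positivity : (0:ℝ) ≤ 12*β),
      mul_le_mul_of_nonneg_left hbadcard (by positivity : (0:ℝ) ≤ 2*d)]
  -- bad-edge bound, B side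
  have hbadB : ((E.filter fun f => ¬ (((LB f.2).card:ℝ) ≤ 12*β)).card : ℝ) * (12*β)
      ≤ 2*d * (∑ b, ((LB b).card:ℝ)) := by
    set Bad := Finset.univ.filter (fun b : B => ¬ (((LB b).card:ℝ) ≤ 12*β)) with hBad
    have hfib : (E.filter fun f => ¬ (((LB f.2).card:ℝ) ≤ 12*β)).card
        = ∑ b ∈ Bad, ((E.filter fun f => ¬ (((LB f.2).card:ℝ) ≤ 12*β)).filter
            (fun f => f.2 = b)).card := by
      apply Finset.card_eq_sum_card_fiberwise
      intro f hf
      rw [Finset.mem_coe, Finset.mem_filter] at hf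
      simp only [hBad, Finset.mem_coe, Finset.mem_filter]
      exact ⟨Finset.mem_univ _, hf.2⟩
    have hstep : ((E.filter fun f => ¬ (((LB f.2).card:ℝ) ≤ 12*β)).card : ℝ)
        ≤ (Bad.card : ℝ) * (2*d) := by
      rw [hfib]
      push_cast
      calc (∑ b ∈ Bad, (((E.filter fun f => ¬ (((LB f.2).card:ℝ) ≤ 12*β)).filter
            (fun f => f.2 = b)).card : ℝ))
          ≤ ∑ b ∈ Bad, (2*d) := by
            apply Finset.sum_le_sum
            intro b _
            have hsub : (E.filter fun f => ¬ (((LB f.2).card:ℝ) ≤ 12*β)).filter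
                (fun f => f.2 = b) ⊆ E.filter (fun f => f.2 = b) := by
              intro f hf
              simp only [Finset.mem_filter] at hf ⊢
              exact ⟨hf.1.1, hf.2⟩
            calc (((E.filter fun f => ¬ (((LB f.2).card:ℝ) ≤ 12*β)).filter
                  (fun f => f.2 = b)).card : ℝ)
                ≤ ((E.filter (fun f => f.2 = b)).card : ℝ) := by
                  exact_mod_cast Finset.card_le_card hsub
              _ ≤ 2*d := (hdegB b).2
        _ = (Bad.card : ℝ) * (2*d) := by rw [Finset.sum_const]; simp [mul_comm]
    have hbadcard : (Bad.card : ℝ) * (12*β) ≤ ∑ b, ((LB b).card:ℝ) := by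
      calc (Bad.card : ℝ) * (12*β) = ∑ _b ∈ Bad, (12*β) := by
            rw [Finset.sum_const]; simp [mul_comm]
        _ ≤ ∑ b ∈ Bad, ((LB b).card:ℝ) := by
            apply Finset.sum_le_sum
            intro b hb
            simp only [hBad, Finset.mem_filter] at hb
            linarith [hb.2]
        _ ≤ ∑ b, ((LB b).card:ℝ) := by
            apply Finset.sum_le_sum_of_subset_of_nonneg (Finset.subset_univ _)
            intro b _ _; positivity
    nlinarith [mul_le_mul_of_nonneg_right hstep (by positivity : (0:ℝ) ≤ 12*β),
      mul_le_mul_of_nonneg_left hbadcard (by positivity : (0:ℝ) ≤ 2*d)]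
  -- many good edges
  have hsumR : (∑ a, ((LA a).card:ℝ)) + (∑ b, ((LB b).card:ℝ)) ≤ β*n := by
    rw [← hCcard]
    exact_mod_cast hsum
  have hEsplit := Finset.card_filter_add_card_filter_not
    (s := E) (p := fun f => (((LA f.1).card:ℝ) ≤ 12*β ∧ ((LB f.2).card:ℝ) ≤ 12*β))
  have hEbsub : E.filter (fun f => ¬ (((LA f.1).card:ℝ) ≤ 12*β ∧ ((LB f.2).card:ℝ) ≤ 12*β))
      ⊆ (E.filter fun f => ¬ (((LA f.1).card:ℝ) ≤ 12*β))
        ∪ (E.filter fun f => ¬ (((LB f.2).card:ℝ) ≤ 12*β)) := by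
    intro f hf
    rw [Finset.mem_filter] at hf
    rw [Finset.mem_union, Finset.mem_filter, Finset.mem_filter]
    tauto
  have hEbcard : ((E.filter (fun f => ¬ (((LA f.1).card:ℝ) ≤ 12*β ∧
      ((LB f.2).card:ℝ) ≤ 12*β))).card : ℝ)
      ≤ ((E.filter fun f => ¬ (((LA f.1).card:ℝ) ≤ 12*β)).card : ℝ)
        + ((E.filter fun f => ¬ (((LB f.2).card:ℝ) ≤ 12*β)).card : ℝ) := by
    have h1 := Finset.card_le_card hEbsub
    have h2 := Finset.card_union_le (E.filter fun f => ¬ (((LA f.1).card:ℝ) ≤ 12*β))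
      (E.filter fun f => ¬ (((LB f.2).card:ℝ) ≤ 12*β))
    exact_mod_cast le_trans h1 h2
  have hEg : (E.card : ℝ) ≤ 3 * ((E.filter (fun f => (((LA f.1).card:ℝ) ≤ 12*β ∧
      ((LB f.2).card:ℝ) ≤ 12*β))).card : ℝ) := by
    have t1 : 2*d*((∑ a, ((LA a).card:ℝ)) + (∑ b, ((LB b).card:ℝ))) ≤ 2*d*(β*n) :=
      mul_le_mul_of_nonneg_left hsumR (by positivity)
    have t2 : 2*β*((n:ℝ)*d) ≤ 2*β*(4*E.card) :=
      mul_le_mul_of_nonneg_left hEcard (by positivity)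
    have h8 : ((E.filter (fun f => ¬ (((LA f.1).card:ℝ) ≤ 12*β ∧
        ((LB f.2).card:ℝ) ≤ 12*β))).card : ℝ) * (12*β) ≤ 8*β*E.card := by
      nlinarith [hbadA, hbadB, hEbcard]
    have h23 : ((E.filter (fun f => ¬ (((LA f.1).card:ℝ) ≤ 12*β ∧
        ((LB f.2).card:ℝ) ≤ 12*β))).card : ℝ) ≤ 2/3 * E.card := by
      have h' : ((E.filter (fun f => ¬ (((LA f.1).card:ℝ) ≤ 12*β ∧
          ((LB f.2).card:ℝ) ≤ 12*β))).card : ℝ) * (12*β) ≤ (2/3 * E.card) * (12*β) := by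
        linarith
      exact le_of_mul_le_mul_right h' (by positivity)
    have hcast : ((E.filter (fun f => (((LA f.1).card:ℝ) ≤ 12*β ∧
        ((LB f.2).card:ℝ) ≤ 12*β))).card : ℝ)
        + ((E.filter (fun f => ¬ (((LA f.1).card:ℝ) ≤ 12*β ∧
        ((LB f.2).card:ℝ) ≤ 12*β))).card : ℝ) = (E.card : ℝ) := by
      exact_mod_cast hEsplit
    linarith
  -- the sets of labelings
  set ΓA := Fintype.piFinset LA with hΓA
  set ΓB := Fintype.piFinset LB with hΓB
  have hΓAne : ΓA.Nonempty :=
    ⟨fun a => (hLAne a).choose, by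
      rw [hΓA, Fintype.mem_piFinset]; exact fun a => (hLAne a).choose_spec⟩
  have hΓBne : ΓB.Nonempty :=
    ⟨fun b => (hLBne b).choose, by
      rw [hΓB, Fintype.mem_piFinset]; exact fun b => (hLBne b).choose_spec⟩
  -- double counting
  have hswap : ∑ γ ∈ ΓA ×ˢ ΓB, (E.filter fun f => (γ.1 f.1, γ.2 f.2) ∈ π f).card
      = ∑ f ∈ E, ((ΓA ×ˢ ΓB).filter fun γ => (γ.1 f.1, γ.2 f.2) ∈ π f).card := by
    simp only [Finset.card_filter]
    exact Finset.sum_comm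
  -- per-good-edge lower bound
  have hgoodlb : ∀ f ∈ E.filter (fun f => (((LA f.1).card:ℝ) ≤ 12*β ∧
      ((LB f.2).card:ℝ) ≤ 12*β)),
      (ΓA.card:ℝ) * ΓB.card / (144 * β^2)
      ≤ (((ΓA ×ˢ ΓB).filter fun γ => (γ.1 f.1, γ.2 f.2) ∈ π f).card : ℝ) := by
    intro f hf
    rw [Finset.mem_filter] at hf
    obtain ⟨hfE, hca, hcb⟩ := hf
    obtain ⟨α, β', hα, hβ', hπf⟩ := hC f hfE
    have hαL : α ∈ LA f.1 := by simp [hLA, hα]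
    have hβL : β' ∈ LB f.2 := by simp [hLB, hβ']
    have hsubset : (ΓA.filter fun γ => γ f.1 = α) ×ˢ (ΓB.filter fun γ => γ f.2 = β')
        ⊆ (ΓA ×ˢ ΓB).filter fun γ => (γ.1 f.1, γ.2 f.2) ∈ π f := by
      intro γ hγ
      rw [Finset.mem_product, Finset.mem_filter, Finset.mem_filter] at hγ
      rw [Finset.mem_filter, Finset.mem_product]
      exact ⟨⟨hγ.1.1, hγ.2.1⟩, by rw [hγ.1.2, hγ.2.2]; exact hπf⟩
    have hcard1 := piFinset_filter_card_mul LA f.1 α hαL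
    have hcard2 := piFinset_filter_card_mul LB f.2 β' hβL
    have hle := Finset.card_le_card hsubset
    rw [Finset.card_product] at hle
    have hca0 : (0:ℝ) < ((LA f.1).card : ℝ) := by
      exact_mod_cast Finset.card_pos.2 (hLAne f.1)
    have hcb0 : (0:ℝ) < ((LB f.2).card : ℝ) := by
      exact_mod_cast Finset.card_pos.2 (hLBne f.2)
    have e1 : ((ΓA.filter fun γ => γ f.1 = α).card : ℝ) * ((LA f.1).card:ℝ)
        = (ΓA.card : ℝ) := by exact_mod_cast hcard1
    have e2 : ((ΓB.filter fun γ => γ f.2 = β').card : ℝ) * ((LB f.2).card:ℝ)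
        = (ΓB.card : ℝ) := by exact_mod_cast hcard2
    calc (ΓA.card:ℝ) * ΓB.card / (144 * β^2)
        ≤ (ΓA.card:ℝ) * ΓB.card / (((LA f.1).card:ℝ) * ((LB f.2).card:ℝ)) := by
          apply div_le_div_of_nonneg_left (by positivity) (by positivity)
          nlinarith
      _ = ((ΓA.filter fun γ => γ f.1 = α).card : ℝ)
            * ((ΓB.filter fun γ => γ f.2 = β').card : ℝ) := by
          rw [← e1, ← e2]; field_simp
      _ ≤ (((ΓA ×ˢ ΓB).filter fun γ => (γ.1 f.1, γ.2 f.2) ∈ π f).card : ℝ) := by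
          exact_mod_cast hle
  -- conclude
  have hmain : ∃ γ ∈ ΓA ×ˢ ΓB, (E.card:ℝ)/(432*β^2)
      ≤ ((E.filter fun f => (γ.1 f.1, γ.2 f.2) ∈ π f).card : ℝ) := by
    by_contra h
    push_neg at h
    have hΓne : (ΓA ×ˢ ΓB).Nonempty := hΓAne.product hΓBne
    have hlt : (∑ γ ∈ ΓA ×ˢ ΓB, ((E.filter fun f => (γ.1 f.1, γ.2 f.2) ∈ π f).card : ℝ))
        < ∑ _γ ∈ ΓA ×ˢ ΓB, (E.card:ℝ)/(432*β^2) :=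
      Finset.sum_lt_sum_of_nonempty hΓne (fun γ hγ => h γ hγ)
    rw [Finset.sum_const] at hlt
    have hswapR : (∑ γ ∈ ΓA ×ˢ ΓB, ((E.filter fun f => (γ.1 f.1, γ.2 f.2) ∈ π f).card : ℝ))
        = ∑ f ∈ E, (((ΓA ×ˢ ΓB).filter fun γ => (γ.1 f.1, γ.2 f.2) ∈ π f).card : ℝ) := by
      exact_mod_cast hswap
    have hlb : ((E.filter (fun f => (((LA f.1).card:ℝ) ≤ 12*β ∧
        ((LB f.2).card:ℝ) ≤ 12*β))).card : ℝ) * ((ΓA.card:ℝ) * ΓB.card / (144 * β^2))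
        ≤ ∑ f ∈ E, (((ΓA ×ˢ ΓB).filter fun γ => (γ.1 f.1, γ.2 f.2) ∈ π f).card : ℝ) := by
      calc ((E.filter (fun f => (((LA f.1).card:ℝ) ≤ 12*β ∧
            ((LB f.2).card:ℝ) ≤ 12*β))).card : ℝ) * ((ΓA.card:ℝ) * ΓB.card / (144 * β^2))
          = ∑ _f ∈ E.filter (fun f => (((LA f.1).card:ℝ) ≤ 12*β ∧
              ((LB f.2).card:ℝ) ≤ 12*β)), ((ΓA.card:ℝ) * ΓB.card / (144 * β^2)) := by
            rw [Finset.sum_const]; simp [mul_comm]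
        _ ≤ ∑ f ∈ E.filter (fun f => (((LA f.1).card:ℝ) ≤ 12*β ∧
              ((LB f.2).card:ℝ) ≤ 12*β)),
              (((ΓA ×ˢ ΓB).filter fun γ => (γ.1 f.1, γ.2 f.2) ∈ π f).card : ℝ) :=
            Finset.sum_le_sum hgoodlb
        _ ≤ ∑ f ∈ E, (((ΓA ×ˢ ΓB).filter fun γ => (γ.1 f.1, γ.2 f.2) ∈ π f).card : ℝ) := by
            apply Finset.sum_le_sum_of_subset_of_nonneg (Finset.filter_subset _ _)
            intro f _ _; positivity
    rw [hswapR] at hlt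
    rw [Finset.card_product] at hlt
    have hfinal : ((ΓA.card : ℝ) * ΓB.card) * ((E.card:ℝ)/(432*β^2))
        ≤ ((E.filter (fun f => (((LA f.1).card:ℝ) ≤ 12*β ∧
        ((LB f.2).card:ℝ) ≤ 12*β))).card : ℝ) * ((ΓA.card:ℝ) * ΓB.card / (144 * β^2)) := by
      have hΓnn : (0:ℝ) ≤ (ΓA.card:ℝ) * ΓB.card := by positivity
      have := mul_le_mul_of_nonneg_right hEg
        (by positivity : (0:ℝ) ≤ (ΓA.card:ℝ) * ΓB.card / (432 * β^2))
      calc ((ΓA.card : ℝ) * ΓB.card) * ((E.card:ℝ)/(432*β^2))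
          = (E.card:ℝ) * ((ΓA.card:ℝ) * ΓB.card / (432 * β^2)) := by ring
        _ ≤ (3 * ((E.filter (fun f => (((LA f.1).card:ℝ) ≤ 12*β ∧
              ((LB f.2).card:ℝ) ≤ 12*β))).card : ℝ))
              * ((ΓA.card:ℝ) * ΓB.card / (432 * β^2)) := this
        _ = ((E.filter (fun f => (((LA f.1).card:ℝ) ≤ 12*β ∧
              ((LB f.2).card:ℝ) ≤ 12*β))).card : ℝ)
              * ((ΓA.card:ℝ) * ΓB.card / (144 * β^2)) := by ring
    have hmulcast : ((ΓA ×ˢ ΓB).card : ℝ) = (ΓA.card : ℝ) * ΓB.card := by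
      rw [Finset.card_product]; push_cast; ring
    rw [nsmul_eq_mul] at hlt
    push_cast at hlt
    linarith
  obtain ⟨γ, hγmem, hγ⟩ := hmain
  refine ⟨γ.1, γ.2, le_trans ?_ hγ⟩
  apply div_le_div_of_nonneg_left (by positivity) (by positivity)
  nlinarith [sq_nonneg β]
end
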